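/- Let (H,α) be a monoidal Hom-Hopf algebra over a commutative ring k and let (M,μ) be a right-covariant (H,α)-Hom-bimodule. Define h▷m := α(h₁)·(μ⁻¹(m)·S(h₂)) for h∈H, m∈M. Then for m∈M^coH: h▷m∈M^coH, and ▷ makes (M^coH, μ restricted) a left (H,α)-Hom-module: 1▷m=μ(m) and (gh)▷μ(m)=α(g)▷(h▷m) for all g,h∈H, m∈M^coH. -/

import Mathlib

open TensorProduct

noncomputable def tmul2 {k A B C D E F : Type*} [CommRing k]
    [AddCommGroup A] [AddCommGroup B] [AddCommGroup C] [AddCommGroup D]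
    [AddCommGroup E] [AddCommGroup F]
    [Module k A] [Module k B] [Module k C] [Module k D] [Module k E] [Module k F]
    (f : A →ₗ[k] C →ₗ[k] E) (g : B →ₗ[k] D →ₗ[k] F) :
    (A ⊗[k] B) →ₗ[k] (C ⊗[k] D) →ₗ[k] (E ⊗[k] F) :=
  TensorProduct.curry
    ((TensorProduct.map (TensorProduct.lift f) (TensorProduct.lift g)) ∘ₗ
      (TensorProduct.tensorTensorTensorComm k A B C D).toLinearMap)

/-- A monoidal Hom-Hopf algebra over a commutative ring `k`. -/
structure MonHomHopf (k H : Type*) [CommRing k] [AddCommGroup H] [Module k H] where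
  α : H ≃ₗ[k] H
  mul : H →ₗ[k] H →ₗ[k] H
  one : H
  comul : H →ₗ[k] H ⊗[k] H
  counit : H →ₗ[k] k
  S : H →ₗ[k] H
  alpha_mul : ∀ g h, α (mul g h) = mul (α g) (α h)
  alpha_one : α one = one
  hom_assoc : ∀ g h l, mul (α g) (mul h l) = mul (mul g h) (α l)
  mul_one' : ∀ h, mul h one = α h
  one_mul' : ∀ h, mul one h = α h
  comul_alpha : ∀ h, comul (α h)
    = TensorProduct.map α.toLinearMap α.toLinearMap (comul h)
  counit_alpha : ∀ h, counit (α h) = counit h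
  hom_coassoc : ∀ h,
    (TensorProduct.assoc k H H H) ((TensorProduct.map comul α.symm.toLinearMap) (comul h))
      = (TensorProduct.map α.symm.toLinearMap comul) (comul h)
  counit_comul_left : ∀ h,
    (TensorProduct.lid k H) ((TensorProduct.map counit LinearMap.id) (comul h)) = α.symm h
  counit_comul_right : ∀ h,
    (TensorProduct.rid k H) ((TensorProduct.map LinearMap.id counit) (comul h)) = α.symm h
  comul_mul : ∀ g h, comul (mul g h) = tmul2 mul mul (comul g) (comul h)
  comul_one : comul one = one ⊗ₜ[k] one
  counit_mul : ∀ g h, counit (mul g h) = counit g * counit h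
  counit_one : counit one = 1
  antipode_left : ∀ h,
    (TensorProduct.lift mul) ((TensorProduct.map S LinearMap.id) (comul h)) = counit h • one
  antipode_right : ∀ h,
    (TensorProduct.lift mul) ((TensorProduct.map LinearMap.id S) (comul h)) = counit h • one
  S_alpha : ∀ h, S (α h) = α (S h)

/-- A right-covariant `(H,α)`-Hom-bimodule. -/
structure RightCovBimod {k H : Type*} [CommRing k] [AddCommGroup H] [Module k H]
    (A : MonHomHopf k H) (M : Type*) [AddCommGroup M] [Module k M] where
  μ : M ≃ₗ[k] M
  lact : H →ₗ[k] M →ₗ[k] M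
  ract : M →ₗ[k] H →ₗ[k] M
  lact_assoc : ∀ g h m, lact (A.α g) (lact h m) = lact (A.mul g h) (μ m)
  lact_one : ∀ m, lact A.one m = μ m
  mu_lact : ∀ h m, μ (lact h m) = lact (A.α h) (μ m)
  ract_assoc : ∀ m g h, ract (μ m) (A.mul g h) = ract (ract m g) (A.α h)
  ract_one : ∀ m, ract m A.one = μ m
  mu_ract : ∀ m h, μ (ract m h) = ract (μ m) (A.α h)
  bimod : ∀ h m g, ract (lact h m) (A.α g) = lact (A.α h) (ract m g)
  sigma : M →ₗ[k] M ⊗[k] H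
  sigma_coassoc : ∀ m,
    (TensorProduct.map sigma A.α.symm.toLinearMap) (sigma m)
      = (TensorProduct.assoc k M H H).symm
          ((TensorProduct.map μ.symm.toLinearMap A.comul) (sigma m))
  sigma_counit : ∀ m,
    (TensorProduct.rid k M) ((TensorProduct.map (LinearMap.id : M →ₗ[k] M) A.counit) (sigma m))
      = μ.symm m
  sigma_mu : ∀ m, sigma (μ m) = TensorProduct.map μ.toLinearMap A.α.toLinearMap (sigma m)
  sigma_cov : ∀ h g m,
    sigma (ract (lact h m) (A.α g))
      = tmul2 lact A.mul (A.comul (A.α h)) (tmul2 ract A.mul (sigma m) (A.comul g))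

/-- The projection `P_R(m) = m_[0] · S(m_[1])`. -/
noncomputable def RightCovBimod.PR {k H : Type*} [CommRing k] [AddCommGroup H] [Module k H]
    {A : MonHomHopf k H} {M : Type*} [AddCommGroup M] [Module k M]
    (B : RightCovBimod A M) : M →ₗ[k] M :=
  (TensorProduct.lift (B.ract.compl₂ A.S)) ∘ₗ B.sigma

/-- The left adjoint Hom-action `h ▷ m = α(h₁) · (μ⁻¹(m) · S(h₂))`; `adLM m h = h ▷ m`. -/
noncomputable def RightCovBimod.adLM {k H : Type*} [CommRing k] [AddCommGroup H] [Module k H]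
    {A : MonHomHopf k H} {M : Type*} [AddCommGroup M] [Module k M]
    (B : RightCovBimod A M) (m : M) : H →ₗ[k] M :=
  (TensorProduct.lift
    ((B.lact.comp A.α.toLinearMap).compl₂ ((B.ract (B.μ.symm m)).comp A.S))) ∘ₗ A.comul

/-- The submodule of right Hom-coinvariants `M^coH = {m | σ(m) = μ⁻¹(m) ⊗ 1}`. -/
noncomputable def RightCovBimod.rcoinv {k H : Type*} [CommRing k] [AddCommGroup H] [Module k H]
    {A : MonHomHopf k H} {M : Type*} [AddCommGroup M] [Module k M]
    (B : RightCovBimod A M) : Submodule k M where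
  carrier := {m | B.sigma m = (B.μ.symm m) ⊗ₜ[k] A.one}
  add_mem' := by
    intro a b ha hb
    simp only [Set.mem_setOf_eq] at *
    rw [map_add, ha, hb, map_add, TensorProduct.add_tmul]
  zero_mem' := by
    simp only [Set.mem_setOf_eq, map_zero, TensorProduct.zero_tmul]
  smul_mem' := by
    intro c x hx
    simp only [Set.mem_setOf_eq] at *
    rw [map_smul, hx, map_smul, TensorProduct.smul_tmul']

@[simp] lemma tmul2_tmul {k A B C D E F : Type*} [CommRing k]
    [AddCommGroup A] [AddCommGroup B] [AddCommGroup C] [AddCommGroup D]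
    [AddCommGroup E] [AddCommGroup F]
    [Module k A] [Module k B] [Module k C] [Module k D] [Module k E] [Module k F]
    (f : A →ₗ[k] C →ₗ[k] E) (g : B →ₗ[k] D →ₗ[k] F) (a : A) (b : B) (c : C) (d : D) :
    tmul2 f g (a ⊗ₜ[k] b) (c ⊗ₜ[k] d) = f a c ⊗ₜ[k] g b d := by
  simp [tmul2]

section Conv

variable {k C B : Type*} [CommRing k] [AddCommGroup C] [Module k C]
  [AddCommGroup B] [Module k B]

structure HomCoalg (k C : Type*) [CommRing k] [AddCommGroup C] [Module k C] where
  d : C →ₗ[k] C ⊗[k] C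
  ce : C →ₗ[k] k
  a : C ≃ₗ[k] C
  coassoc' : ∀ c, (TensorProduct.assoc k C C C) ((TensorProduct.map d a.symm.toLinearMap) (d c))
      = (TensorProduct.map a.symm.toLinearMap d) (d c)
  ce_left : ∀ c, (TensorProduct.lid k C) ((TensorProduct.map ce LinearMap.id) (d c)) = a.symm c
  ce_right : ∀ c, (TensorProduct.rid k C) ((TensorProduct.map LinearMap.id ce) (d c)) = a.symm c

structure HomAlg (k B : Type*) [CommRing k] [AddCommGroup B] [Module k B] where
  m : B →ₗ[k] B →ₗ[k] B
  e : B
  a : B ≃ₗ[k] B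
  assoc' : ∀ x y z, m (a x) (m y z) = m (m x y) (a z)
  mul_e : ∀ x, m x e = a x
  e_mul : ∀ x, m e x = a x

variable (CD : HomCoalg k C) (AD : HomAlg k B)

noncomputable def conv (f g : C →ₗ[k] B) : C →ₗ[k] B :=
  TensorProduct.lift ((AD.m.comp f).compl₂ g) ∘ₗ CD.d

noncomputable def cunit : C →ₗ[k] B := CD.ce.smulRight AD.e

lemma conv_cunit_right (f : C →ₗ[k] B) (hf : ∀ x, f (CD.a x) = AD.a (f x)) :
    conv CD AD f (cunit CD AD) = f := by
  apply LinearMap.ext; intro c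
  have key : ∀ t : C ⊗[k] C,
      TensorProduct.lift ((AD.m.comp f).compl₂ (cunit CD AD)) t
        = AD.a (f ((TensorProduct.rid k C) ((TensorProduct.map LinearMap.id CD.ce) t))) := by
    intro t
    induction t using TensorProduct.induction_on with
    | zero => simp
    | tmul x y =>
        simp [cunit, AD.mul_e, TensorProduct.smul_tmul']
    | add u v hu hv => simp only [map_add, LinearMap.add_apply, hu, hv]
  have h2 : AD.a (f (CD.a.symm c)) = f c := by
    have := hf (CD.a.symm c); simpa using this.symm
  simp only [conv, LinearMap.comp_apply, key, CD.ce_right, h2]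

lemma conv_cunit_left (f : C →ₗ[k] B) (hf : ∀ x, f (CD.a x) = AD.a (f x)) :
    conv CD AD (cunit CD AD) f = f := by
  apply LinearMap.ext; intro c
  have key : ∀ t : C ⊗[k] C,
      TensorProduct.lift ((AD.m.comp (cunit CD AD)).compl₂ f) t
        = AD.a (f ((TensorProduct.lid k C) ((TensorProduct.map CD.ce LinearMap.id) t))) := by
    intro t
    induction t using TensorProduct.induction_on with
    | zero => simp
    | tmul x y =>
        simp [cunit, AD.e_mul, TensorProduct.smul_tmul']
    | add u v hu hv => simp only [map_add, LinearMap.add_apply, hu, hv]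
  have h2 : AD.a (f (CD.a.symm c)) = f c := by
    have := hf (CD.a.symm c); simpa using this.symm
  simp only [conv, LinearMap.comp_apply, key, CD.ce_left, h2]

lemma conv_assoc (f g h : C →ₗ[k] B) (hf : ∀ x, f (CD.a x) = AD.a (f x))
    (hh : ∀ x, h (CD.a x) = AD.a (h x)) :
    conv CD AD (conv CD AD f g) h = conv CD AD f (conv CD AD g h) := by
  apply LinearMap.ext; intro c
  set G : C ⊗[k] C →ₗ[k] B := TensorProduct.lift ((AD.m.comp f).compl₂ g) with hG
  set Kf : C ⊗[k] C →ₗ[k] B := TensorProduct.lift ((AD.m.comp g).compl₂ h) with hK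
  set L₁ : (C ⊗[k] C) ⊗[k] C →ₗ[k] B := TensorProduct.lift ((AD.m.comp G).compl₂ h) with hL1
  set L₂ : C ⊗[k] (C ⊗[k] C) →ₗ[k] B := TensorProduct.lift ((AD.m.comp f).compl₂ Kf) with hL2
  have lhs_eq : conv CD AD (conv CD AD f g) h c
      = L₁ ((TensorProduct.map LinearMap.id CD.a.toLinearMap)
          ((TensorProduct.map CD.d CD.a.symm.toLinearMap) (CD.d c))) := by
    have : ∀ t : C ⊗[k] C,
        TensorProduct.lift ((AD.m.comp (conv CD AD f g)).compl₂ h) t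
          = L₁ ((TensorProduct.map LinearMap.id CD.a.toLinearMap)
              ((TensorProduct.map CD.d CD.a.symm.toLinearMap) t)) := by
      intro t
      induction t using TensorProduct.induction_on with
      | zero => simp
      | tmul x y => simp [conv, hL1, hG]
      | add u v hu hv => simp only [map_add, LinearMap.add_apply, hu, hv]
    simpa [conv] using this (CD.d c)
  have rhs_eq : conv CD AD f (conv CD AD g h) c
      = L₂ ((TensorProduct.map CD.a.toLinearMap LinearMap.id)
          ((TensorProduct.assoc k C C C)
            ((TensorProduct.map CD.d CD.a.symm.toLinearMap) (CD.d c)))) := by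
    rw [CD.coassoc' c]
    have : ∀ t : C ⊗[k] C,
        TensorProduct.lift ((AD.m.comp f).compl₂ (conv CD AD g h)) t
          = L₂ ((TensorProduct.map CD.a.toLinearMap LinearMap.id)
              ((TensorProduct.map CD.a.symm.toLinearMap CD.d) t)) := by
      intro t
      induction t using TensorProduct.induction_on with
      | zero => simp
      | tmul x y => simp [conv, hL2, hK]
      | add u v hu hv => simp only [map_add, LinearMap.add_apply, hu, hv]
    simpa [conv] using this (CD.d c)
  rw [lhs_eq, rhs_eq]
  generalize (TensorProduct.map CD.d CD.a.symm.toLinearMap) (CD.d c) = u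
  induction u using TensorProduct.induction_on with
  | zero => simp
  | tmul w z =>
      induction w using TensorProduct.induction_on with
      | zero => simp
      | tmul x y =>
          simp only [TensorProduct.map_tmul, TensorProduct.assoc_tmul, LinearMap.id_coe, id_eq,
            hL1, hL2, hG, hK, TensorProduct.lift.tmul, LinearMap.compl₂_apply,
            LinearMap.comp_apply, LinearEquiv.coe_coe]
          rw [hh z, ← AD.assoc', ← hf x]
      | add u1 u2 h1 h2 =>
          simp only [TensorProduct.add_tmul, map_add, LinearMap.add_apply, h1, h2]
  | add u v hu hv => simp only [map_add, LinearMap.add_apply, hu, hv]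

lemma conv_inv_unique (f g h : C →ₗ[k] B)
    (hg : ∀ x, g (CD.a x) = AD.a (g x)) (hh : ∀ x, h (CD.a x) = AD.a (h x))
    (h1 : conv CD AD g f = cunit CD AD) (h2 : conv CD AD f h = cunit CD AD) :
    g = h := by
  calc g = conv CD AD g (cunit CD AD) := (conv_cunit_right CD AD g hg).symm
    _ = conv CD AD g (conv CD AD f h) := by rw [h2]
    _ = conv CD AD (conv CD AD g f) h := (conv_assoc CD AD g f h hg hh).symm
    _ = conv CD AD (cunit CD AD) h := by rw [h1]
    _ = h := conv_cunit_left CD AD h hh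

end Conv
section HopfBasic

variable {k H : Type*} [CommRing k] [AddCommGroup H] [Module k H] (A : MonHomHopf k H)

noncomputable def MonHomHopf.cH : HomCoalg k H :=
  ⟨A.comul, A.counit, A.α, A.hom_coassoc, A.counit_comul_left, A.counit_comul_right⟩

noncomputable def MonHomHopf.aH : HomAlg k H :=
  ⟨A.mul, A.one, A.α, A.hom_assoc, A.mul_one', A.one_mul'⟩

lemma MonHomHopf.alphaInv_one : A.α.symm A.one = A.one := by
  conv_lhs => rw [← A.alpha_one]
  exact A.α.symm_apply_apply _

lemma MonHomHopf.alphaInv_mul (x y : H) :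
    A.α.symm (A.mul x y) = A.mul (A.α.symm x) (A.α.symm y) := by
  apply A.α.injective
  rw [A.α.apply_symm_apply, A.alpha_mul, A.α.apply_symm_apply, A.α.apply_symm_apply]

lemma MonHomHopf.S_alphaInv (h : H) : A.S (A.α.symm h) = A.α.symm (A.S h) := by
  apply A.α.injective
  rw [← A.S_alpha, A.α.apply_symm_apply, A.α.apply_symm_apply]

lemma MonHomHopf.counit_alphaInv (h : H) : A.counit (A.α.symm h) = A.counit h := by
  conv_rhs => rw [← A.α.apply_symm_apply h, A.counit_alpha]

lemma MonHomHopf.map_alphaInv_alpha (t : H ⊗[k] H) :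
    TensorProduct.map A.α.symm.toLinearMap A.α.symm.toLinearMap
      (TensorProduct.map A.α.toLinearMap A.α.toLinearMap t) = t := by
  induction t using TensorProduct.induction_on with
  | zero => simp only [map_zero]
  | tmul x y =>
      simp only [TensorProduct.map_tmul, LinearEquiv.coe_coe, LinearEquiv.symm_apply_apply]
  | add u v hu hv => simp only [map_add, hu, hv]

lemma MonHomHopf.comul_alphaInv (h : H) :
    A.comul (A.α.symm h)
      = TensorProduct.map A.α.symm.toLinearMap A.α.symm.toLinearMap (A.comul h) := by
  have h1 := A.comul_alpha (A.α.symm h)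
  rw [A.α.apply_symm_apply] at h1
  rw [h1, A.map_alphaInv_alpha]

lemma MonHomHopf.S_one : A.S A.one = A.one := by
  have h1 := A.antipode_left A.one
  rw [A.comul_one] at h1
  simp only [TensorProduct.map_tmul, TensorProduct.lift.tmul, LinearMap.id_coe, id_eq,
    A.counit_one, one_smul, A.mul_one'] at h1
  apply A.α.injective
  rw [h1, A.alpha_one]

/-- The Hom-algebra structure on `H ⊗ H`. -/
noncomputable def MonHomHopf.aHH : HomAlg k (H ⊗[k] H) where
  m := tmul2 A.mul A.mul
  e := A.one ⊗ₜ[k] A.one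
  a := TensorProduct.congr A.α A.α
  assoc' := by
    intro x y z
    induction x using TensorProduct.induction_on with
    | zero => simp
    | tmul a b =>
        induction y using TensorProduct.induction_on with
        | zero => simp
        | tmul c d =>
            induction z using TensorProduct.induction_on with
            | zero => simp
            | tmul e f => simp [A.hom_assoc]
            | add u v hu hv => simp only [map_add, LinearMap.add_apply, hu, hv]
        | add u v hu hv => simp only [map_add, LinearMap.add_apply, hu, hv]
    | add u v hu hv => simp only [map_add, LinearMap.add_apply, hu, hv]
  mul_e := by
    intro x
    induction x using TensorProduct.induction_on with
    | zero => simp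
    | tmul a b => simp [A.mul_one']
    | add u v hu hv => simp only [map_add, LinearMap.add_apply, hu, hv]
  e_mul := by
    intro x
    induction x using TensorProduct.induction_on with
    | zero => simp
    | tmul a b => simp [A.one_mul']
    | add u v hu hv => simp only [map_add, LinearMap.add_apply, hu, hv]

end HopfBasic
section HopfHH

variable {k H : Type*} [CommRing k] [AddCommGroup H] [Module k H] (A : MonHomHopf k H)

lemma MonHomHopf.congr_symm_eq :
    (TensorProduct.congr A.α A.α).symm.toLinearMap
      = TensorProduct.map A.α.symm.toLinearMap A.α.symm.toLinearMap := by
  apply LinearMap.ext; intro t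
  apply (TensorProduct.congr A.α A.α).injective
  simp only [LinearEquiv.coe_coe, LinearEquiv.apply_symm_apply]
  symm
  induction t using TensorProduct.induction_on with
  | zero => simp only [map_zero]
  | tmul x y =>
      simp only [TensorProduct.map_tmul, TensorProduct.congr_tmul, LinearEquiv.coe_coe,
        LinearEquiv.apply_symm_apply]
  | add u v hu hv => simp only [map_add, hu, hv]

lemma MonHomHopf.congr_symm_apply (t : H ⊗[k] H) :
    (TensorProduct.congr A.α A.α).symm t
      = TensorProduct.map A.α.symm.toLinearMap A.α.symm.toLinearMap t := by
  have := A.congr_symm_eq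
  exact congrFun (congrArg (fun (f : H ⊗[k] H →ₗ[k] H ⊗[k] H) => (f : H ⊗[k] H → H ⊗[k] H)) this) t

lemma MonHomHopf.congr_eq :
    (TensorProduct.congr A.α A.α).toLinearMap
      = TensorProduct.map A.α.toLinearMap A.α.toLinearMap := by
  apply LinearMap.ext; intro t
  induction t using TensorProduct.induction_on with
  | zero => simp only [map_zero]
  | tmul x y =>
      simp only [LinearEquiv.coe_coe, TensorProduct.map_tmul, TensorProduct.congr_tmul]
  | add u v hu hv => simp only [map_add, hu, hv]

/-- The comultiplication on `H ⊗ H`. -/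
noncomputable def MonHomHopf.d2 :
    H ⊗[k] H →ₗ[k] (H ⊗[k] H) ⊗[k] (H ⊗[k] H) :=
  (tensorTensorTensorComm k H H H H).toLinearMap ∘ₗ (TensorProduct.map A.comul A.comul)

/-- The counit on `H ⊗ H`. -/
noncomputable def MonHomHopf.ce2 : H ⊗[k] H →ₗ[k] k :=
  TensorProduct.lift (((LinearMap.mul k k).comp A.counit).compl₂ A.counit)

lemma MonHomHopf.coassocHH (c : H ⊗[k] H) :
    (TensorProduct.assoc k (H ⊗[k] H) (H ⊗[k] H) (H ⊗[k] H))
        ((TensorProduct.map A.d2 (TensorProduct.map A.α.symm.toLinearMap A.α.symm.toLinearMap))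
          (A.d2 c))
      = (TensorProduct.map (TensorProduct.map A.α.symm.toLinearMap A.α.symm.toLinearMap) A.d2)
          (A.d2 c) := by
  set inv := A.α.symm.toLinearMap with hinv
  set QL : H →ₗ[k] H ⊗[k] (H ⊗[k] H) :=
    (TensorProduct.assoc k H H H).toLinearMap ∘ₗ (TensorProduct.map A.comul inv) ∘ₗ A.comul
    with hQL
  set RL : H →ₗ[k] H ⊗[k] (H ⊗[k] H) :=
    (TensorProduct.map inv A.comul) ∘ₗ A.comul with hRL
  have hQR : QL = RL := by
    apply LinearMap.ext; intro x
    simp only [hQL, hRL, LinearMap.comp_apply, LinearEquiv.coe_coe]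
    exact A.hom_coassoc x
  set Shuf : (H ⊗[k] (H ⊗[k] H)) ⊗[k] (H ⊗[k] (H ⊗[k] H)) →ₗ[k]
      (H ⊗[k] H) ⊗[k] ((H ⊗[k] H) ⊗[k] (H ⊗[k] H)) :=
    (TensorProduct.map LinearMap.id (tensorTensorTensorComm k H H H H).toLinearMap) ∘ₗ
      (tensorTensorTensorComm k H (H ⊗[k] H) H (H ⊗[k] H)).toLinearMap with hShuf
  have claimL : ∀ c : H ⊗[k] H,
      (TensorProduct.assoc k (H ⊗[k] H) (H ⊗[k] H) (H ⊗[k] H))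
          ((TensorProduct.map A.d2 (TensorProduct.map inv inv)) (A.d2 c))
        = Shuf ((TensorProduct.map QL QL) c) := by
    intro c
    induction c using TensorProduct.induction_on with
    | zero => simp only [map_zero]
    | add u v hu hv => simp only [map_add, hu, hv]
    | tmul g h =>
        have e1 : A.d2 (g ⊗ₜ[k] h)
            = (tensorTensorTensorComm k H H H H) (A.comul g ⊗ₜ[k] A.comul h) := by
          simp only [MonHomHopf.d2, LinearMap.comp_apply, TensorProduct.map_tmul,
            LinearEquiv.coe_coe]
        have e2 : (TensorProduct.map QL QL) (g ⊗ₜ[k] h)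
            = ((TensorProduct.assoc k H H H) ((TensorProduct.map A.comul inv) (A.comul g)))
               ⊗ₜ[k]
              ((TensorProduct.assoc k H H H) ((TensorProduct.map A.comul inv) (A.comul h))) := by
          simp only [TensorProduct.map_tmul, hQL, LinearMap.comp_apply, LinearEquiv.coe_coe]
        rw [e1, e2]
        generalize A.comul g = w
        generalize A.comul h = v
        induction w using TensorProduct.induction_on with
        | zero => simp only [map_zero, TensorProduct.zero_tmul]
        | add u1 u2 h1 h2 =>
            simp only [map_add, TensorProduct.add_tmul, h1, h2]
        | tmul x y =>
            induction v using TensorProduct.induction_on with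
            | zero => simp only [map_zero, TensorProduct.tmul_zero, TensorProduct.zero_tmul,
                map_zero]
            | add v1 v2 h1 h2 =>
                simp only [map_add, TensorProduct.tmul_add, TensorProduct.add_tmul, h1, h2]
            | tmul z u =>
                have e3 : A.d2 (x ⊗ₜ[k] z)
                    = (tensorTensorTensorComm k H H H H) (A.comul x ⊗ₜ[k] A.comul z) := by
                  simp only [MonHomHopf.d2, LinearMap.comp_apply, TensorProduct.map_tmul,
                    LinearEquiv.coe_coe]
                simp only [TensorProduct.tensorTensorTensorComm_tmul, TensorProduct.map_tmul,
                  TensorProduct.assoc_tmul, e3]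
                generalize A.comul x = s
                generalize A.comul z = t
                induction s using TensorProduct.induction_on with
                | zero => simp only [map_zero, TensorProduct.zero_tmul, map_zero]
                | add s1 s2 h1 h2 =>
                    simp only [map_add, TensorProduct.add_tmul, h1, h2]
                | tmul p q =>
                    induction t using TensorProduct.induction_on with
                    | zero => simp only [map_zero, TensorProduct.tmul_zero,
                        TensorProduct.zero_tmul, map_zero]
                    | add t1 t2 h1 h2 =>
                        simp only [map_add, TensorProduct.tmul_add, TensorProduct.add_tmul, h1,
                          h2]
                    | tmul r w' =>
                        simp only [TensorProduct.tensorTensorTensorComm_tmul,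
                          TensorProduct.assoc_tmul, hShuf, LinearMap.comp_apply,
                          LinearEquiv.coe_coe, TensorProduct.map_tmul, LinearMap.id_coe, id_eq]
  have claimR : ∀ c : H ⊗[k] H,
      (TensorProduct.map (TensorProduct.map inv inv) A.d2) (A.d2 c)
        = Shuf ((TensorProduct.map RL RL) c) := by
    intro c
    induction c using TensorProduct.induction_on with
    | zero => simp only [map_zero]
    | add u v hu hv => simp only [map_add, hu, hv]
    | tmul g h =>
        have e1 : A.d2 (g ⊗ₜ[k] h)
            = (tensorTensorTensorComm k H H H H) (A.comul g ⊗ₜ[k] A.comul h) := by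
          simp only [MonHomHopf.d2, LinearMap.comp_apply, TensorProduct.map_tmul,
            LinearEquiv.coe_coe]
        have e2 : (TensorProduct.map RL RL) (g ⊗ₜ[k] h)
            = ((TensorProduct.map inv A.comul) (A.comul g))
               ⊗ₜ[k] ((TensorProduct.map inv A.comul) (A.comul h)) := by
          simp only [TensorProduct.map_tmul, hRL, LinearMap.comp_apply]
        rw [e1, e2]
        generalize A.comul g = w
        generalize A.comul h = v
        induction w using TensorProduct.induction_on with
        | zero => simp only [map_zero, TensorProduct.zero_tmul]
        | add u1 u2 h1 h2 =>
            simp only [map_add, TensorProduct.add_tmul, h1, h2]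
        | tmul x y =>
            induction v using TensorProduct.induction_on with
            | zero => simp only [map_zero, TensorProduct.tmul_zero, TensorProduct.zero_tmul,
                map_zero]
            | add v1 v2 h1 h2 =>
                simp only [map_add, TensorProduct.tmul_add, TensorProduct.add_tmul, h1, h2]
            | tmul z u =>
                have e3 : A.d2 (y ⊗ₜ[k] u)
                    = (tensorTensorTensorComm k H H H H) (A.comul y ⊗ₜ[k] A.comul u) := by
                  simp only [MonHomHopf.d2, LinearMap.comp_apply, TensorProduct.map_tmul,
                    LinearEquiv.coe_coe]
                simp only [TensorProduct.tensorTensorTensorComm_tmul, TensorProduct.map_tmul,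
                  e3]
                generalize A.comul y = s
                generalize A.comul u = t
                induction s using TensorProduct.induction_on with
                | zero => simp only [map_zero, TensorProduct.zero_tmul, map_zero,
                    TensorProduct.tmul_zero]
                | add s1 s2 h1 h2 =>
                    simp only [map_add, TensorProduct.add_tmul, TensorProduct.tmul_add, h1, h2]
                | tmul p q =>
                    induction t using TensorProduct.induction_on with
                    | zero => simp only [map_zero, TensorProduct.tmul_zero,
                        TensorProduct.zero_tmul, map_zero]
                    | add t1 t2 h1 h2 =>
                        simp only [map_add, TensorProduct.tmul_add, TensorProduct.add_tmul, h1,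
                          h2]
                    | tmul r w' =>
                        simp only [TensorProduct.tensorTensorTensorComm_tmul, hShuf,
                          LinearMap.comp_apply, LinearEquiv.coe_coe, TensorProduct.map_tmul,
                          LinearMap.id_coe, id_eq]
  rw [claimL c, claimR c, hQR]

/-- The Hom-coalgebra structure on `H ⊗ H`. -/
noncomputable def MonHomHopf.cHH : HomCoalg k (H ⊗[k] H) where
  d := A.d2
  ce := A.ce2
  a := TensorProduct.congr A.α A.α
  coassoc' := by
    intro c
    rw [A.congr_symm_eq]
    exact A.coassocHH c
  ce_left := by
    intro c
    rw [A.congr_symm_apply]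
    set F : H ⊗[k] H →ₗ[k] H :=
      (TensorProduct.lid k H).toLinearMap ∘ₗ (TensorProduct.map A.counit LinearMap.id) with hF
    induction c using TensorProduct.induction_on with
    | zero => simp only [map_zero]
    | add u v hu hv => simp only [map_add, hu, hv]
    | tmul g h =>
        have e1 : A.d2 (g ⊗ₜ[k] h)
            = (tensorTensorTensorComm k H H H H) (A.comul g ⊗ₜ[k] A.comul h) := by
          simp only [MonHomHopf.d2, LinearMap.comp_apply, TensorProduct.map_tmul,
            LinearEquiv.coe_coe]
        have key : ∀ (w v : H ⊗[k] H),
            (TensorProduct.lid k (H ⊗[k] H))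
                ((TensorProduct.map A.ce2 LinearMap.id)
                  ((tensorTensorTensorComm k H H H H) (w ⊗ₜ[k] v)))
              = F w ⊗ₜ[k] F v := by
          intro w v
          induction w using TensorProduct.induction_on with
          | zero => simp only [map_zero, TensorProduct.zero_tmul, map_zero]
          | add u1 u2 h1 h2 =>
              simp only [map_add, TensorProduct.add_tmul, h1, h2]
          | tmul x y =>
              induction v using TensorProduct.induction_on with
              | zero => simp only [map_zero, TensorProduct.tmul_zero, map_zero,
                  TensorProduct.tmul_zero]
              | add v1 v2 h1 h2 =>
                  simp only [map_add, TensorProduct.tmul_add, h1, h2]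
              | tmul z u =>
                  simp only [TensorProduct.tensorTensorTensorComm_tmul, TensorProduct.map_tmul,
                    MonHomHopf.ce2, TensorProduct.lift.tmul, LinearMap.compl₂_apply,
                    LinearMap.comp_apply, LinearMap.mul_apply', LinearMap.id_coe, id_eq,
                    TensorProduct.lid_tmul, hF, LinearEquiv.coe_coe]
                  rw [mul_smul, ← TensorProduct.tmul_smul, ← TensorProduct.smul_tmul']
        rw [e1, key]
        have f1 : F (A.comul g) = A.α.symm g := A.counit_comul_left g
        have f2 : F (A.comul h) = A.α.symm h := A.counit_comul_left h
        rw [f1, f2]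
        simp only [TensorProduct.map_tmul]
        rfl
  ce_right := by
    intro c
    rw [A.congr_symm_apply]
    set F : H ⊗[k] H →ₗ[k] H :=
      (TensorProduct.rid k H).toLinearMap ∘ₗ (TensorProduct.map LinearMap.id A.counit) with hF
    induction c using TensorProduct.induction_on with
    | zero => simp only [map_zero]
    | add u v hu hv => simp only [map_add, hu, hv]
    | tmul g h =>
        have e1 : A.d2 (g ⊗ₜ[k] h)
            = (tensorTensorTensorComm k H H H H) (A.comul g ⊗ₜ[k] A.comul h) := by
          simp only [MonHomHopf.d2, LinearMap.comp_apply, TensorProduct.map_tmul,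
            LinearEquiv.coe_coe]
        have key : ∀ (w v : H ⊗[k] H),
            (TensorProduct.rid k (H ⊗[k] H))
                ((TensorProduct.map LinearMap.id A.ce2)
                  ((tensorTensorTensorComm k H H H H) (w ⊗ₜ[k] v)))
              = F w ⊗ₜ[k] F v := by
          intro w v
          induction w using TensorProduct.induction_on with
          | zero => simp only [map_zero, TensorProduct.zero_tmul, map_zero]
          | add u1 u2 h1 h2 =>
              simp only [map_add, TensorProduct.add_tmul, h1, h2]
          | tmul x y =>
              induction v using TensorProduct.induction_on with
              | zero => simp only [map_zero, TensorProduct.tmul_zero, map_zero,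
                  TensorProduct.tmul_zero]
              | add v1 v2 h1 h2 =>
                  simp only [map_add, TensorProduct.tmul_add, h1, h2]
              | tmul z u =>
                  simp only [TensorProduct.tensorTensorTensorComm_tmul, TensorProduct.map_tmul,
                    MonHomHopf.ce2, TensorProduct.lift.tmul, LinearMap.compl₂_apply,
                    LinearMap.comp_apply, LinearMap.mul_apply', LinearMap.id_coe, id_eq,
                    TensorProduct.rid_tmul, hF, LinearEquiv.coe_coe]
                  rw [mul_smul, ← TensorProduct.tmul_smul, ← TensorProduct.smul_tmul']
        rw [e1, key]
        have f1 : F (A.comul g) = A.α.symm g := A.counit_comul_right g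
        have f2 : F (A.comul h) = A.α.symm h := A.counit_comul_right h
        rw [f1, f2]
        simp only [TensorProduct.map_tmul]
        rfl
  
end HopfHH
section AntiMul

variable {k H : Type*} [CommRing k] [AddCommGroup H] [Module k H] (A : MonHomHopf k H)

@[simp] lemma MonHomHopf.cHH_d : (A.cHH).d = A.d2 := rfl
@[simp] lemma MonHomHopf.cHH_ce : (A.cHH).ce = A.ce2 := rfl
@[simp] lemma MonHomHopf.cHH_a : (A.cHH).a = TensorProduct.congr A.α A.α := rfl
@[simp] lemma MonHomHopf.aH_m : (A.aH).m = A.mul := rfl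
@[simp] lemma MonHomHopf.aH_e : (A.aH).e = A.one := rfl
@[simp] lemma MonHomHopf.aH_a : (A.aH).a = A.α := rfl
@[simp] lemma MonHomHopf.cH_d : (A.cH).d = A.comul := rfl
@[simp] lemma MonHomHopf.cH_ce : (A.cH).ce = A.counit := rfl
@[simp] lemma MonHomHopf.cH_a : (A.cH).a = A.α := rfl
@[simp] lemma MonHomHopf.aHH_m : (A.aHH).m = tmul2 A.mul A.mul := rfl
@[simp] lemma MonHomHopf.aHH_e : (A.aHH).e = A.one ⊗ₜ[k] A.one := rfl
@[simp] lemma MonHomHopf.aHH_a : (A.aHH).a = TensorProduct.congr A.α A.α := rfl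

lemma MonHomHopf.d2_tmul (g h : H) :
    A.d2 (g ⊗ₜ[k] h)
      = (tensorTensorTensorComm k H H H H) (A.comul g ⊗ₜ[k] A.comul h) := by
  simp only [MonHomHopf.d2, LinearMap.comp_apply, TensorProduct.map_tmul, LinearEquiv.coe_coe]

lemma MonHomHopf.ce2_tmul (g h : H) :
    A.ce2 (g ⊗ₜ[k] h) = A.counit g * A.counit h := by
  simp only [MonHomHopf.ce2, TensorProduct.lift.tmul, LinearMap.compl₂_apply,
    LinearMap.comp_apply, LinearMap.mul_apply']

noncomputable def MonHomHopf.Fm : H ⊗[k] H →ₗ[k] H := TensorProduct.lift A.mul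
noncomputable def MonHomHopf.Gm : H ⊗[k] H →ₗ[k] H := A.S ∘ₗ A.Fm
noncomputable def MonHomHopf.Km : H ⊗[k] H →ₗ[k] H :=
  TensorProduct.lift (((A.mul.comp A.S).compl₂ A.S).flip)

@[simp] lemma MonHomHopf.Fm_tmul (a b : H) : A.Fm (a ⊗ₜ[k] b) = A.mul a b := by
  simp [MonHomHopf.Fm]

@[simp] lemma MonHomHopf.Gm_tmul (a b : H) : A.Gm (a ⊗ₜ[k] b) = A.S (A.mul a b) := by
  simp [MonHomHopf.Gm, MonHomHopf.Fm]

@[simp] lemma MonHomHopf.Km_tmul (a b : H) : A.Km (a ⊗ₜ[k] b) = A.mul (A.S b) (A.S a) := by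
  simp [MonHomHopf.Km]

lemma MonHomHopf.Fm_compat : ∀ x, A.Fm ((A.cHH).a x) = (A.aH).a (A.Fm x) := by
  intro x
  simp only [MonHomHopf.cHH_a, MonHomHopf.aH_a]
  induction x using TensorProduct.induction_on with
  | zero => simp only [map_zero]
  | tmul a b =>
      simp only [TensorProduct.congr_tmul, MonHomHopf.Fm_tmul, A.alpha_mul]
  | add u v hu hv => simp only [map_add, hu, hv]

lemma MonHomHopf.Gm_compat : ∀ x, A.Gm ((A.cHH).a x) = (A.aH).a (A.Gm x) := by
  intro x
  have h1 := A.Fm_compat x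
  simp only [MonHomHopf.cHH_a, MonHomHopf.aH_a] at h1 ⊢
  simp only [MonHomHopf.Gm, LinearMap.comp_apply, h1, A.S_alpha]

lemma MonHomHopf.Km_compat : ∀ x, A.Km ((A.cHH).a x) = (A.aH).a (A.Km x) := by
  intro x
  simp only [MonHomHopf.cHH_a, MonHomHopf.aH_a]
  induction x using TensorProduct.induction_on with
  | zero => simp only [map_zero]
  | tmul a b =>
      simp only [TensorProduct.congr_tmul, MonHomHopf.Km_tmul, A.S_alpha, ← A.alpha_mul]
  | add u v hu hv => simp only [map_add, hu, hv]

lemma MonHomHopf.convGF : conv A.cHH A.aH A.Gm A.Fm = cunit A.cHH A.aH := by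
  apply LinearMap.ext; intro c
  induction c using TensorProduct.induction_on with
  | zero => simp only [map_zero]
  | add u v hu hv => simp only [map_add, hu, hv]
  | tmul g h =>
      have key1 : ∀ w v : H ⊗[k] H,
          TensorProduct.lift (((A.aH).m.comp A.Gm).compl₂ A.Fm)
              ((tensorTensorTensorComm k H H H H) (w ⊗ₜ[k] v))
            = TensorProduct.lift ((A.mul.comp A.S).compl₂ LinearMap.id)
                (tmul2 A.mul A.mul w v) := by
        intro w v
        induction w using TensorProduct.induction_on with
        | zero => simp only [TensorProduct.zero_tmul, map_zero, LinearMap.zero_apply]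
        | add u1 u2 h1 h2 =>
            simp only [TensorProduct.add_tmul, map_add, LinearMap.add_apply, h1, h2]
        | tmul a b =>
            induction v using TensorProduct.induction_on with
            | zero => simp only [TensorProduct.tmul_zero, map_zero, LinearMap.map_zero]
            | add v1 v2 h1 h2 =>
                simp only [TensorProduct.tmul_add, map_add, LinearMap.map_add, h1, h2]
            | tmul c' d =>
                simp only [TensorProduct.tensorTensorTensorComm_tmul, tmul2_tmul,
                  TensorProduct.lift.tmul, LinearMap.compl₂_apply, LinearMap.comp_apply,
                  MonHomHopf.aH_m, MonHomHopf.Gm_tmul, MonHomHopf.Fm_tmul, LinearMap.id_coe,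
                  id_eq]
      have key2 : ∀ t : H ⊗[k] H,
          TensorProduct.lift ((A.mul.comp A.S).compl₂ LinearMap.id) t
            = TensorProduct.lift A.mul ((TensorProduct.map A.S LinearMap.id) t) := by
        intro t
        induction t using TensorProduct.induction_on with
        | zero => simp only [map_zero]
        | add u1 u2 h1 h2 => simp only [map_add, h1, h2]
        | tmul a b =>
            simp only [TensorProduct.lift.tmul, LinearMap.compl₂_apply, LinearMap.comp_apply,
              TensorProduct.map_tmul, LinearMap.id_coe, id_eq]
      have lhs : conv A.cHH A.aH A.Gm A.Fm (g ⊗ₜ[k] h) = (A.counit g * A.counit h) • A.one := by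
        simp only [conv, LinearMap.comp_apply, MonHomHopf.cHH_d, A.d2_tmul, key1,
          ← A.comul_mul, key2, A.antipode_left, A.counit_mul]
      rw [lhs]
      simp only [cunit, LinearMap.smulRight_apply, MonHomHopf.cHH_ce, MonHomHopf.aH_e,
        A.ce2_tmul]

noncomputable def MonHomHopf.Tm : H →ₗ[k] H →ₗ[k] H :=
  (A.mul.comp A.α.symm.toLinearMap).compl₂ (A.S.comp A.α.symm.toLinearMap)

lemma MonHomHopf.Tm_lem (x : H) :
    TensorProduct.lift A.Tm (A.comul x) = A.counit x • A.one := by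
  have key : ∀ t : H ⊗[k] H,
      TensorProduct.lift A.Tm t
        = TensorProduct.lift A.mul ((TensorProduct.map LinearMap.id A.S)
            ((TensorProduct.map A.α.symm.toLinearMap A.α.symm.toLinearMap) t)) := by
    intro t
    induction t using TensorProduct.induction_on with
    | zero => simp only [map_zero]
    | add u1 u2 h1 h2 => simp only [map_add, h1, h2]
    | tmul a b =>
        simp only [TensorProduct.lift.tmul, MonHomHopf.Tm, LinearMap.compl₂_apply,
          LinearMap.comp_apply, TensorProduct.map_tmul, LinearMap.id_coe, id_eq]
  rw [key, ← A.comul_alphaInv, A.antipode_right, A.counit_alphaInv]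

noncomputable def MonHomHopf.Mz (z : H) : H →ₗ[k] H →ₗ[k] H :=
  (A.mul.comp (A.mul.flip z)).compl₂ (A.α.toLinearMap ∘ₗ A.S)

lemma MonHomHopf.jug1 (a b c d : H) :
    A.mul (A.mul a c) (A.mul (A.S d) (A.S b))
      = A.mul (A.mul a (A.mul (A.α.symm c) (A.S (A.α.symm d)))) (A.α (A.S b)) := by
  have h1 : A.mul a c = A.α (A.mul (A.α.symm a) (A.α.symm c)) := by
    rw [A.alpha_mul, A.α.apply_symm_apply, A.α.apply_symm_apply]
  rw [h1, A.hom_assoc]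
  congr 1
  have h2 : A.S d = A.α (A.S (A.α.symm d)) := by
    rw [← A.S_alpha, A.α.apply_symm_apply]
  rw [h2, ← A.hom_assoc, A.α.apply_symm_apply]

lemma MonHomHopf.convFK : conv A.cHH A.aH A.Fm A.Km = cunit A.cHH A.aH := by
  apply LinearMap.ext; intro c
  induction c using TensorProduct.induction_on with
  | zero => simp only [map_zero]
  | add u v hu hv => simp only [map_add, hu, hv]
  | tmul g h =>
      have key1 : ∀ (v w : H ⊗[k] H),
          TensorProduct.lift (((A.aH).m.comp A.Fm).compl₂ A.Km)
              ((tensorTensorTensorComm k H H H H) (w ⊗ₜ[k] v))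
            = TensorProduct.lift (A.Mz (TensorProduct.lift A.Tm v)) w := by
        intro v w
        induction w using TensorProduct.induction_on with
        | zero => simp only [TensorProduct.zero_tmul, map_zero]
        | add u1 u2 h1 h2 =>
            simp only [TensorProduct.add_tmul, map_add, h1, h2]
        | tmul a b =>
            induction v using TensorProduct.induction_on with
            | zero =>
                simp only [TensorProduct.tmul_zero, map_zero, LinearMap.map_zero]
                simp only [MonHomHopf.Mz, TensorProduct.lift.tmul, LinearMap.compl₂_apply,
                  LinearMap.comp_apply, LinearMap.flip_apply, map_zero, LinearMap.zero_apply]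
            | add v1 v2 h1 h2 =>
                simp only [TensorProduct.tmul_add, map_add, h1, h2]
                simp only [MonHomHopf.Mz, TensorProduct.lift.tmul, LinearMap.compl₂_apply,
                  LinearMap.comp_apply, LinearMap.flip_apply, map_add, LinearMap.add_apply]
            | tmul c' d =>
                simp only [TensorProduct.tensorTensorTensorComm_tmul, TensorProduct.lift.tmul,
                  LinearMap.compl₂_apply, LinearMap.comp_apply, MonHomHopf.aH_m,
                  MonHomHopf.Fm_tmul, MonHomHopf.Km_tmul, MonHomHopf.Mz, MonHomHopf.Tm,
                  LinearMap.flip_apply, LinearEquiv.coe_coe]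
                exact A.jug1 a b c' d
      have key3 : ∀ t : H ⊗[k] H,
          TensorProduct.lift (A.Mz (A.counit h • A.one)) t
            = A.counit h • A.α (TensorProduct.lift A.mul
                ((TensorProduct.map LinearMap.id A.S) t)) := by
        intro t
        induction t using TensorProduct.induction_on with
        | zero => simp only [map_zero, smul_zero]
        | add u1 u2 h1 h2 => simp only [map_add, h1, h2, smul_add]
        | tmul a b =>
            simp only [TensorProduct.lift.tmul, MonHomHopf.Mz, LinearMap.compl₂_apply,
              LinearMap.comp_apply, LinearMap.flip_apply, TensorProduct.map_tmul,
              LinearMap.id_coe, id_eq, LinearMap.map_smul, LinearMap.smul_apply,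
              A.mul_one', LinearEquiv.coe_coe]
            rw [← A.alpha_mul]
      have lhs : conv A.cHH A.aH A.Fm A.Km (g ⊗ₜ[k] h)
          = (A.counit g * A.counit h) • A.one := by
        simp only [conv, LinearMap.comp_apply, MonHomHopf.cHH_d, A.d2_tmul, key1, A.Tm_lem,
          key3, A.antipode_right]
        rw [map_smul, A.alpha_one, smul_smul, mul_comm]
      rw [lhs]
      simp only [cunit, LinearMap.smulRight_apply, MonHomHopf.cHH_ce, MonHomHopf.aH_e,
        A.ce2_tmul]

lemma MonHomHopf.S_mul (g h : H) : A.S (A.mul g h) = A.mul (A.S h) (A.S g) := by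
  have huniq := conv_inv_unique A.cHH A.aH A.Fm A.Gm A.Km A.Gm_compat A.Km_compat
    A.convGF A.convFK
  have := congrFun (congrArg (fun (f : H ⊗[k] H →ₗ[k] H) => (f : H ⊗[k] H → H)) huniq) (g ⊗ₜ[k] h)
  simpa using this

end AntiMul
section AntiComul

variable {k H : Type*} [CommRing k] [AddCommGroup H] [Module k H] (A : MonHomHopf k H)

lemma MonHomHopf.congr_apply (t : H ⊗[k] H) :
    (TensorProduct.congr A.α A.α) t
      = TensorProduct.map A.α.toLinearMap A.α.toLinearMap t := by
  have := A.congr_eq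
  exact congrFun (congrArg (fun (f : H ⊗[k] H →ₗ[k] H ⊗[k] H) => (f : H ⊗[k] H → H ⊗[k] H)) this) t

noncomputable def MonHomHopf.Fc : H →ₗ[k] H ⊗[k] H := A.comul
noncomputable def MonHomHopf.Gc : H →ₗ[k] H ⊗[k] H := A.comul ∘ₗ A.S
noncomputable def MonHomHopf.Kc : H →ₗ[k] H ⊗[k] H :=
  (TensorProduct.comm k H H).toLinearMap ∘ₗ (TensorProduct.map A.S A.S) ∘ₗ A.comul

lemma MonHomHopf.Fc_compat : ∀ x, A.Fc ((A.cH).a x) = (A.aHH).a (A.Fc x) := by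
  intro x
  simp only [MonHomHopf.cH_a, MonHomHopf.aHH_a, MonHomHopf.Fc, A.comul_alpha, A.congr_apply]

lemma MonHomHopf.Gc_compat : ∀ x, A.Gc ((A.cH).a x) = (A.aHH).a (A.Gc x) := by
  intro x
  simp only [MonHomHopf.cH_a, MonHomHopf.aHH_a, MonHomHopf.Gc, LinearMap.comp_apply,
    A.S_alpha, A.comul_alpha, A.congr_apply]

lemma MonHomHopf.Kc_compat : ∀ x, A.Kc ((A.cH).a x) = (A.aHH).a (A.Kc x) := by
  intro x
  simp only [MonHomHopf.cH_a, MonHomHopf.aHH_a, MonHomHopf.Kc, LinearMap.comp_apply,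
    A.comul_alpha, A.congr_apply, LinearEquiv.coe_coe]
  generalize A.comul x = t
  induction t using TensorProduct.induction_on with
  | zero => simp only [map_zero]
  | add u v hu hv => simp only [map_add, hu, hv]
  | tmul a b =>
      simp only [TensorProduct.map_tmul, TensorProduct.comm_tmul, LinearEquiv.coe_coe,
        A.S_alpha]

lemma MonHomHopf.convGFc : conv A.cH A.aHH A.Gc A.Fc = cunit A.cH A.aHH := by
  apply LinearMap.ext; intro h
  have key1 : ∀ t : H ⊗[k] H,
      TensorProduct.lift (((A.aHH).m.comp A.Gc).compl₂ A.Fc) t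
        = A.comul (TensorProduct.lift ((A.mul.comp A.S).compl₂ LinearMap.id) t) := by
    intro t
    induction t using TensorProduct.induction_on with
    | zero => simp only [map_zero]
    | add u v hu hv => simp only [map_add, hu, hv]
    | tmul a b =>
        simp only [TensorProduct.lift.tmul, LinearMap.compl₂_apply, LinearMap.comp_apply,
          MonHomHopf.aHH_m, MonHomHopf.Gc, MonHomHopf.Fc, LinearMap.id_coe, id_eq,
          A.comul_mul]
  have key2 : ∀ t : H ⊗[k] H,
      TensorProduct.lift ((A.mul.comp A.S).compl₂ LinearMap.id) t
        = TensorProduct.lift A.mul ((TensorProduct.map A.S LinearMap.id) t) := by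
    intro t
    induction t using TensorProduct.induction_on with
    | zero => simp only [map_zero]
    | add u1 u2 h1 h2 => simp only [map_add, h1, h2]
    | tmul a b =>
        simp only [TensorProduct.lift.tmul, LinearMap.compl₂_apply, LinearMap.comp_apply,
          TensorProduct.map_tmul, LinearMap.id_coe, id_eq]
  have lhs : conv A.cH A.aHH A.Gc A.Fc h = A.counit h • (A.one ⊗ₜ[k] A.one) := by
    simp only [conv, LinearMap.comp_apply, MonHomHopf.cH_d, key1, key2, A.antipode_left,
      map_smul, A.comul_one]
  rw [lhs]
  simp only [cunit, LinearMap.smulRight_apply, MonHomHopf.cH_ce, MonHomHopf.aHH_e]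

noncomputable def MonHomHopf.J : H ⊗[k] H →ₗ[k] H ⊗[k] H :=
  (TensorProduct.comm k H H).toLinearMap ∘ₗ
    (TensorProduct.map (A.S ∘ₗ A.α.toLinearMap) (A.S ∘ₗ A.α.toLinearMap))

@[simp] lemma MonHomHopf.J_tmul (c d : H) :
    A.J (c ⊗ₜ[k] d) = A.S (A.α d) ⊗ₜ[k] A.S (A.α c) := by
  simp [MonHomHopf.J]

noncomputable def MonHomHopf.L1 : H ⊗[k] (H ⊗[k] (H ⊗[k] H)) →ₗ[k] H ⊗[k] H :=
  TensorProduct.lift (tmul2 A.mul A.mul) ∘ₗ (TensorProduct.map LinearMap.id A.J) ∘ₗ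
    (TensorProduct.assoc k H H (H ⊗[k] H)).symm.toLinearMap

lemma MonHomHopf.L1_tmul (a y : H) (e : H ⊗[k] H) :
    A.L1 (a ⊗ₜ[k] (y ⊗ₜ[k] e)) = tmul2 A.mul A.mul (a ⊗ₜ[k] y) (A.J e) := by
  simp only [MonHomHopf.L1, LinearMap.comp_apply, LinearEquiv.coe_coe,
    TensorProduct.assoc_symm_tmul, TensorProduct.map_tmul, LinearMap.id_coe, id_eq,
    TensorProduct.lift.tmul]

/-- `g_a a q = (a · S q) ⊗ 1`. -/
noncomputable def MonHomHopf.ga (a : H) : H →ₗ[k] H ⊗[k] H :=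
  ((TensorProduct.mk k H H).flip A.one) ∘ₗ (A.mul a) ∘ₗ A.S

@[simp] lemma MonHomHopf.ga_apply (a q : H) :
    A.ga a q = (A.mul a (A.S q)) ⊗ₜ[k] A.one := by
  simp [MonHomHopf.ga]

noncomputable def MonHomHopf.P2 (a : H) : H →ₗ[k] H →ₗ[k] H ⊗[k] H :=
  ((LinearMap.lsmul k (H ⊗[k] H)).comp A.counit).compl₂ (A.ga a)

@[simp] lemma MonHomHopf.P2_apply (a p q : H) :
    A.P2 a p q = A.counit p • ((A.mul a (A.S q)) ⊗ₜ[k] A.one) := by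
  simp [MonHomHopf.P2]

lemma MonHomHopf.claimD1a (a : H) (c : H) : ∀ w : H ⊗[k] H,
    A.L1 (a ⊗ₜ[k] ((TensorProduct.map A.α.toLinearMap LinearMap.id)
        ((TensorProduct.assoc k H H H) (w ⊗ₜ[k] c))))
      = (A.mul a (A.S (A.α c))) ⊗ₜ[k]
          (A.α (TensorProduct.lift A.mul ((TensorProduct.map LinearMap.id A.S) w))) := by
  intro w
  induction w using TensorProduct.induction_on with
  | zero => simp only [TensorProduct.zero_tmul, map_zero, TensorProduct.tmul_zero]
  | add u1 u2 h1 h2 =>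
      simp only [TensorProduct.add_tmul, map_add, TensorProduct.tmul_add, h1, h2]
  | tmul z u =>
      rw [TensorProduct.assoc_tmul]
      simp only [TensorProduct.map_tmul, LinearMap.id_coe, id_eq, LinearEquiv.coe_coe,
        A.L1_tmul, MonHomHopf.J_tmul, tmul2_tmul, TensorProduct.lift.tmul]
      rw [A.S_alpha u, ← A.alpha_mul]

lemma MonHomHopf.claimD1 (a : H) : ∀ s : H ⊗[k] H,
    A.L1 (a ⊗ₜ[k] ((TensorProduct.map A.α.toLinearMap LinearMap.id)
        ((TensorProduct.assoc k H H H)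
          ((TensorProduct.map A.comul A.α.symm.toLinearMap) s))))
      = TensorProduct.lift (A.P2 a) s := by
  intro s
  induction s using TensorProduct.induction_on with
  | zero => simp only [map_zero, TensorProduct.tmul_zero]
  | add u1 u2 h1 h2 =>
      simp only [map_add, TensorProduct.tmul_add, h1, h2]
  | tmul p q =>
      rw [TensorProduct.map_tmul]
      rw [A.claimD1a a (A.α.symm.toLinearMap q) (A.comul p)]
      rw [A.antipode_right p]
      simp only [LinearEquiv.coe_coe, map_smul, A.alpha_one, TensorProduct.lift.tmul,
        MonHomHopf.P2_apply, TensorProduct.tmul_smul]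
      rw [A.α.apply_symm_apply]

lemma MonHomHopf.claimD2 (a x : H) :
    TensorProduct.lift (A.P2 a) (A.comul x)
      = (A.mul a (A.S (A.α.symm x))) ⊗ₜ[k] A.one := by
  have key : ∀ s : H ⊗[k] H,
      TensorProduct.lift (A.P2 a) s
        = A.ga a ((TensorProduct.lid k H) ((TensorProduct.map A.counit LinearMap.id) s)) := by
    intro s
    induction s using TensorProduct.induction_on with
    | zero => simp only [map_zero]
    | add u1 u2 h1 h2 => simp only [map_add, h1, h2]
    | tmul p q =>
        simp only [TensorProduct.lift.tmul, MonHomHopf.P2_apply, TensorProduct.map_tmul,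
          LinearMap.id_coe, id_eq, TensorProduct.lid_tmul, map_smul, MonHomHopf.ga_apply]
  rw [key, A.counit_comul_left, A.ga_apply]

lemma MonHomHopf.coassoc_inner : ∀ t : H ⊗[k] H,
    (TensorProduct.map LinearMap.id (TensorProduct.map LinearMap.id A.comul))
        ((TensorProduct.map A.α.symm.toLinearMap A.comul) t)
      = (TensorProduct.map A.α.symm.toLinearMap
          ((TensorProduct.map A.α.toLinearMap LinearMap.id) ∘ₗ
            (TensorProduct.assoc k H H H).toLinearMap ∘ₗ
            (TensorProduct.map A.comul A.α.symm.toLinearMap) ∘ₗ A.comul)) t := by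
  intro t
  induction t using TensorProduct.induction_on with
  | zero => simp only [map_zero]
  | add u v hu hv => simp only [map_add, hu, hv]
  | tmul a x =>
      simp only [TensorProduct.map_tmul, LinearMap.id_coe, id_eq, LinearMap.comp_apply,
        LinearEquiv.coe_coe]
      congr 1
      rw [A.hom_coassoc x]
      generalize A.comul x = s
      induction s using TensorProduct.induction_on with
      | zero => simp only [map_zero]
      | add u1 u2 h1 h2 => simp only [map_add, h1, h2]
      | tmul p q =>
          simp only [TensorProduct.map_tmul, LinearMap.id_coe, id_eq, LinearEquiv.coe_coe,
            A.α.apply_symm_apply]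

lemma MonHomHopf.convFKc : conv A.cH A.aHH A.Fc A.Kc = cunit A.cH A.aHH := by
  apply LinearMap.ext; intro h
  have claimA : ∀ t : H ⊗[k] H,
      TensorProduct.lift (((A.aHH).m.comp A.Fc).compl₂ A.Kc) t
        = A.L1 ((TensorProduct.map LinearMap.id (TensorProduct.map LinearMap.id A.comul))
            ((TensorProduct.assoc k H H H)
              ((TensorProduct.map A.comul A.α.symm.toLinearMap) t))) := by
    intro t
    induction t using TensorProduct.induction_on with
    | zero => simp only [map_zero]
    | add u v hu hv => simp only [map_add, hu, hv]
    | tmul a b =>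
        simp only [TensorProduct.lift.tmul, LinearMap.compl₂_apply, LinearMap.comp_apply,
          MonHomHopf.aHH_m, MonHomHopf.Fc, MonHomHopf.Kc, LinearEquiv.coe_coe,
          TensorProduct.map_tmul, LinearMap.id_coe, id_eq]
        generalize A.comul a = w
        induction w using TensorProduct.induction_on with
        | zero => simp only [TensorProduct.zero_tmul, map_zero, LinearMap.zero_apply]
        | add w1 w2 h1 h2 =>
            simp only [TensorProduct.add_tmul, map_add, LinearMap.add_apply, h1, h2]
        | tmul x y =>
            rw [TensorProduct.assoc_tmul]
            simp only [TensorProduct.map_tmul, LinearMap.id_coe, id_eq, LinearEquiv.coe_coe]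
            rw [A.comul_alphaInv b]
            generalize A.comul b = v
            induction v using TensorProduct.induction_on with
            | zero => simp only [map_zero, TensorProduct.tmul_zero, LinearMap.map_zero]
            | add v1 v2 h1 h2 =>
                simp only [map_add, TensorProduct.tmul_add, LinearMap.map_add, h1, h2]
            | tmul z u =>
                simp only [TensorProduct.map_tmul, TensorProduct.comm_tmul,
                  LinearEquiv.coe_coe, A.L1_tmul, MonHomHopf.J_tmul, tmul2_tmul,
                  A.α.apply_symm_apply]
  have step : conv A.cH A.aHH A.Fc A.Kc h
      = A.L1 ((TensorProduct.map LinearMap.id (TensorProduct.map LinearMap.id A.comul))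
          ((TensorProduct.map A.α.symm.toLinearMap A.comul) (A.comul h))) := by
    simp only [conv, LinearMap.comp_apply, MonHomHopf.cH_d, claimA, A.hom_coassoc]
  rw [step]
  rw [A.coassoc_inner]
  have claimFin : ∀ t : H ⊗[k] H,
      A.L1 ((TensorProduct.map A.α.symm.toLinearMap
          ((TensorProduct.map A.α.toLinearMap LinearMap.id) ∘ₗ
            (TensorProduct.assoc k H H H).toLinearMap ∘ₗ
            (TensorProduct.map A.comul A.α.symm.toLinearMap) ∘ₗ A.comul)) t)
        = TensorProduct.lift (A.Tm.compr₂ ((TensorProduct.mk k H H).flip A.one)) t := by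
    intro t
    induction t using TensorProduct.induction_on with
    | zero => simp only [map_zero]
    | add u v hu hv => simp only [map_add, hu, hv]
    | tmul a x =>
        rw [TensorProduct.map_tmul]
        simp only [LinearMap.comp_apply, LinearEquiv.coe_coe]
        rw [A.claimD1 (A.α.symm a) (A.comul x)]
        rw [A.claimD2]
        simp only [TensorProduct.lift.tmul, LinearMap.compr₂_apply, MonHomHopf.Tm,
          LinearMap.compl₂_apply, LinearMap.comp_apply, TensorProduct.mk_apply,
          LinearMap.flip_apply]
        rfl
  rw [claimFin]
  have fin2 : ∀ s : H ⊗[k] H,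
      TensorProduct.lift (A.Tm.compr₂ ((TensorProduct.mk k H H).flip A.one)) s
        = ((TensorProduct.mk k H H).flip A.one) (TensorProduct.lift A.Tm s) := by
    intro s
    induction s using TensorProduct.induction_on with
    | zero => simp only [map_zero]
    | add u v hu hv => simp only [map_add, hu, hv]
    | tmul a x => simp only [TensorProduct.lift.tmul, LinearMap.compr₂_apply]
  rw [fin2, A.Tm_lem]
  simp only [map_smul, cunit, LinearMap.smulRight_apply, MonHomHopf.cH_ce, MonHomHopf.aHH_e,
    LinearMap.flip_apply, TensorProduct.mk_apply]

lemma MonHomHopf.comul_S (x : H) :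
    A.comul (A.S x)
      = (TensorProduct.comm k H H) ((TensorProduct.map A.S A.S) (A.comul x)) := by
  have huniq := conv_inv_unique A.cH A.aHH A.Fc A.Gc A.Kc A.Gc_compat A.Kc_compat
    A.convGFc A.convFKc
  have := congrFun (congrArg (fun (f : H →ₗ[k] H ⊗[k] H) => (f : H → H ⊗[k] H)) huniq) x
  simpa [MonHomHopf.Gc, MonHomHopf.Kc] using this

end AntiComul
section Main

variable {k H : Type*} [CommRing k] [AddCommGroup H] [Module k H] {A : MonHomHopf k H}
  {M : Type*} [AddCommGroup M] [Module k M] (B : RightCovBimod A M)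

lemma RightCovBimod.muInv_lact (h : H) (m : M) :
    B.μ.symm (B.lact h m) = B.lact (A.α.symm h) (B.μ.symm m) := by
  apply B.μ.injective
  rw [B.μ.apply_symm_apply, B.mu_lact, A.α.apply_symm_apply, B.μ.apply_symm_apply]

lemma RightCovBimod.muInv_ract (m : M) (h : H) :
    B.μ.symm (B.ract m h) = B.ract (B.μ.symm m) (A.α.symm h) := by
  apply B.μ.injective
  rw [B.μ.apply_symm_apply, B.mu_ract, A.α.apply_symm_apply, B.μ.apply_symm_apply]

lemma RightCovBimod.sigma_muInv (m : M) :
    B.sigma (B.μ.symm m)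
      = TensorProduct.map B.μ.symm.toLinearMap A.α.symm.toLinearMap (B.sigma m) := by
  have h1 := B.sigma_mu (B.μ.symm m)
  rw [B.μ.apply_symm_apply] at h1
  rw [h1]
  generalize B.sigma (B.μ.symm m) = t
  symm
  induction t using TensorProduct.induction_on with
  | zero => simp only [map_zero]
  | tmul x y =>
      simp only [TensorProduct.map_tmul, LinearEquiv.coe_coe, LinearEquiv.symm_apply_apply]
  | add u v hu hv => simp only [map_add, hu, hv]

lemma RightCovBimod.coinv_muInv {m : M} (hm : B.sigma m = (B.μ.symm m) ⊗ₜ[k] A.one) :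
    B.sigma (B.μ.symm m) = (B.μ.symm (B.μ.symm m)) ⊗ₜ[k] A.one := by
  rw [B.sigma_muInv, hm]
  simp only [TensorProduct.map_tmul, LinearEquiv.coe_coe]
  rw [A.alphaInv_one]

/-- The bilinear kernel of `adLM`. -/
noncomputable def RightCovBimod.Gd (m : M) : H →ₗ[k] H →ₗ[k] M :=
  (B.lact.comp A.α.toLinearMap).compl₂ ((B.ract (B.μ.symm m)).comp A.S)

lemma RightCovBimod.adLM_eq (m : M) (h : H) :
    B.adLM m h = TensorProduct.lift (B.Gd m) (A.comul h) := rfl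

@[simp] lemma RightCovBimod.Gd_apply (m : M) (a b : H) :
    B.Gd m a b = B.lact (A.α a) (B.ract (B.μ.symm m) (A.S b)) := by
  simp only [RightCovBimod.Gd, LinearMap.compl₂_apply, LinearMap.comp_apply,
    LinearEquiv.coe_coe]

lemma RightCovBimod.adLM_one (m : M) : B.adLM m A.one = B.μ m := by
  rw [B.adLM_eq, A.comul_one, TensorProduct.lift.tmul, B.Gd_apply, A.alpha_one, A.S_one,
    B.ract_one, B.μ.apply_symm_apply, B.lact_one]

lemma RightCovBimod.Gd_zero : B.Gd 0 = 0 := by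
  apply LinearMap.ext; intro a; apply LinearMap.ext; intro b
  simp only [B.Gd_apply, map_zero, LinearMap.zero_apply, LinearMap.map_zero]

lemma RightCovBimod.Gd_add (m1 m2 : M) : B.Gd (m1 + m2) = B.Gd m1 + B.Gd m2 := by
  apply LinearMap.ext; intro a; apply LinearMap.ext; intro b
  simp only [B.Gd_apply, map_add, LinearMap.add_apply, LinearMap.map_add]

lemma RightCovBimod.adLM_assoc (g h : H) (m : M) :
    B.adLM (B.μ m) (A.mul g h) = B.adLM (B.adLM m h) (A.α g) := by
  rw [B.adLM_eq, B.adLM_eq, A.comul_mul, A.comul_alpha, B.adLM_eq]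
  generalize A.comul g = w
  generalize A.comul h = v
  induction w using TensorProduct.induction_on with
  | zero => simp only [map_zero, LinearMap.zero_apply]
  | add w1 w2 h1 h2 => simp only [map_add, LinearMap.add_apply, h1, h2]
  | tmul a b =>
      induction v using TensorProduct.induction_on with
      | zero =>
          simp only [map_zero, LinearMap.map_zero, B.Gd_zero, TensorProduct.map_tmul,
            TensorProduct.lift.tmul, LinearMap.zero_apply]
      | add v1 v2 h1 h2 =>
          simp only [map_add, LinearMap.map_add, B.Gd_add, TensorProduct.map_tmul,
            TensorProduct.lift.tmul, LinearMap.add_apply] at h1 h2 ⊢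
          rw [h1, h2]
      | tmul c d =>
          simp only [TensorProduct.map_tmul, LinearEquiv.coe_coe, TensorProduct.lift.tmul,
            tmul2_tmul, B.Gd_apply]
          rw [B.μ.symm_apply_apply, A.S_mul b d]
          rw [B.muInv_lact, B.muInv_ract, A.α.symm_apply_apply]
          rw [A.S_alpha b, B.bimod c _ (A.S b), B.lact_assoc, ← A.alpha_mul]
          rw [B.mu_ract, B.mu_ract, B.μ.apply_symm_apply, A.α.apply_symm_apply,
            ← B.ract_assoc, B.μ.apply_symm_apply]

/-- `PL m x e = α(x)·(μ⁻²(m)·e)`. -/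
noncomputable def RightCovBimod.PL (m : M) : H →ₗ[k] H →ₗ[k] M :=
  (B.lact.comp A.α.toLinearMap).compl₂ (B.ract (B.μ.symm (B.μ.symm m)))

@[simp] lemma RightCovBimod.PL_apply (m : M) (x e : H) :
    B.PL m x e = B.lact (A.α x) (B.ract (B.μ.symm (B.μ.symm m)) e) := by
  simp only [RightCovBimod.PL, LinearMap.compl₂_apply, LinearMap.comp_apply,
    LinearEquiv.coe_coe]

/-- `PRm y e = α(y)·(1·e)`. -/
noncomputable def MonHomHopf.PRm (A' : MonHomHopf k H) : H →ₗ[k] H →ₗ[k] H :=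
  (A'.mul.comp A'.α.toLinearMap).compl₂ (A'.mul A'.one)

@[simp] lemma MonHomHopf.PRm_apply (A' : MonHomHopf k H) (y e : H) :
    A'.PRm y e = A'.mul (A'.α y) (A'.mul A'.one e) := by
  simp only [MonHomHopf.PRm, LinearMap.compl₂_apply, LinearMap.comp_apply,
    LinearEquiv.coe_coe]

noncomputable def RightCovBimod.L1M (m : M) :
    H ⊗[k] (H ⊗[k] (H ⊗[k] H)) →ₗ[k] M ⊗[k] H :=
  TensorProduct.lift (tmul2 (B.PL m) A.PRm) ∘ₗ (TensorProduct.map LinearMap.id A.J) ∘ₗ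
    (TensorProduct.assoc k H H (H ⊗[k] H)).symm.toLinearMap

lemma RightCovBimod.L1M_tmul (m : M) (a y : H) (e : H ⊗[k] H) :
    B.L1M m (a ⊗ₜ[k] (y ⊗ₜ[k] e)) = tmul2 (B.PL m) A.PRm (a ⊗ₜ[k] y) (A.J e) := by
  simp only [RightCovBimod.L1M, LinearMap.comp_apply, LinearEquiv.coe_coe,
    TensorProduct.assoc_symm_tmul, TensorProduct.map_tmul, LinearMap.id_coe, id_eq,
    TensorProduct.lift.tmul]

lemma RightCovBimod.claimD1aM (m : M) (x c : H) : ∀ w : H ⊗[k] H,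
    B.L1M m (x ⊗ₜ[k] ((TensorProduct.map A.α.toLinearMap LinearMap.id)
        ((TensorProduct.assoc k H H H) (w ⊗ₜ[k] c))))
      = (B.PL m x (A.S (A.α c))) ⊗ₜ[k]
          (A.α (A.α (TensorProduct.lift A.mul ((TensorProduct.map LinearMap.id A.S) w)))) := by
  intro w
  induction w using TensorProduct.induction_on with
  | zero => simp only [TensorProduct.zero_tmul, map_zero, TensorProduct.tmul_zero]
  | add u1 u2 h1 h2 =>
      simp only [TensorProduct.add_tmul, map_add, TensorProduct.tmul_add, h1, h2]
  | tmul z u =>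
      rw [TensorProduct.assoc_tmul]
      simp only [TensorProduct.map_tmul, LinearMap.id_coe, id_eq, LinearEquiv.coe_coe,
        B.L1M_tmul, MonHomHopf.J_tmul, tmul2_tmul, TensorProduct.lift.tmul, A.PRm_apply]
      rw [A.one_mul', A.S_alpha u, ← A.alpha_mul, ← A.alpha_mul]

noncomputable def RightCovBimod.gaM (m : M) (x : H) : H →ₗ[k] M ⊗[k] H :=
  ((TensorProduct.mk k M H).flip A.one) ∘ₗ (B.PL m x) ∘ₗ A.S

@[simp] lemma RightCovBimod.gaM_apply (m : M) (x q : H) :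
    B.gaM m x q = (B.PL m x (A.S q)) ⊗ₜ[k] A.one := by
  simp [RightCovBimod.gaM]

noncomputable def RightCovBimod.P2M (m : M) (x : H) : H →ₗ[k] H →ₗ[k] M ⊗[k] H :=
  ((LinearMap.lsmul k (M ⊗[k] H)).comp A.counit).compl₂ (B.gaM m x)

@[simp] lemma RightCovBimod.P2M_apply (m : M) (x p q : H) :
    B.P2M m x p q = A.counit p • ((B.PL m x (A.S q)) ⊗ₜ[k] A.one) := by
  simp [RightCovBimod.P2M]

lemma RightCovBimod.claimD1M (m : M) (x : H) : ∀ s : H ⊗[k] H,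
    B.L1M m (x ⊗ₜ[k] ((TensorProduct.map A.α.toLinearMap LinearMap.id)
        ((TensorProduct.assoc k H H H)
          ((TensorProduct.map A.comul A.α.symm.toLinearMap) s))))
      = TensorProduct.lift (B.P2M m x) s := by
  intro s
  induction s using TensorProduct.induction_on with
  | zero => simp only [map_zero, TensorProduct.tmul_zero]
  | add u1 u2 h1 h2 =>
      simp only [map_add, TensorProduct.tmul_add, h1, h2]
  | tmul p q =>
      rw [TensorProduct.map_tmul]
      rw [B.claimD1aM m x (A.α.symm.toLinearMap q) (A.comul p)]
      rw [A.antipode_right p]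
      simp only [LinearEquiv.coe_coe, map_smul, A.alpha_one, TensorProduct.lift.tmul,
        B.P2M_apply, TensorProduct.tmul_smul, TensorProduct.smul_tmul']
      rw [A.α.apply_symm_apply]

lemma RightCovBimod.claimD2M (m : M) (x b : H) :
    TensorProduct.lift (B.P2M m x) (A.comul b)
      = (B.PL m x (A.S (A.α.symm b))) ⊗ₜ[k] A.one := by
  have key : ∀ s : H ⊗[k] H,
      TensorProduct.lift (B.P2M m x) s
        = B.gaM m x ((TensorProduct.lid k H) ((TensorProduct.map A.counit LinearMap.id) s)) := by
    intro s
    induction s using TensorProduct.induction_on with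
    | zero => simp only [map_zero]
    | add u1 u2 h1 h2 => simp only [map_add, h1, h2]
    | tmul p q =>
        simp only [TensorProduct.lift.tmul, B.P2M_apply, TensorProduct.map_tmul,
          LinearMap.id_coe, id_eq, TensorProduct.lid_tmul, map_smul, B.gaM_apply,
          TensorProduct.smul_tmul']
  rw [key, A.counit_comul_left, B.gaM_apply]

noncomputable def RightCovBimod.TmM (m : M) : H →ₗ[k] H →ₗ[k] M :=
  B.lact.compl₂ ((B.ract (B.μ.symm (B.μ.symm m))).comp (A.S ∘ₗ A.α.symm.toLinearMap))

@[simp] lemma RightCovBimod.TmM_apply (m : M) (a b : H) :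
    B.TmM m a b = B.lact a (B.ract (B.μ.symm (B.μ.symm m)) (A.S (A.α.symm b))) := by
  simp only [RightCovBimod.TmM, LinearMap.compl₂_apply, LinearMap.comp_apply,
    LinearEquiv.coe_coe]

lemma RightCovBimod.adLM_coinv (h : H) {m : M}
    (hm : B.sigma m = (B.μ.symm m) ⊗ₜ[k] A.one) :
    B.sigma (B.adLM m h) = (B.μ.symm (B.adLM m h)) ⊗ₜ[k] A.one := by
  have claim2 : ∀ a b : H,
      B.sigma (B.Gd m a b)
        = tmul2 B.lact A.mul
            ((TensorProduct.map A.α.toLinearMap A.α.toLinearMap) (A.comul a))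
            (tmul2 B.ract A.mul ((B.μ.symm (B.μ.symm m)) ⊗ₜ[k] A.one)
              ((TensorProduct.comm k H H) ((TensorProduct.map A.S A.S) (A.comul b)))) := by
    intro a b
    rw [B.Gd_apply, ← B.bimod a (B.μ.symm m) (A.S b), B.sigma_cov a (A.S b) (B.μ.symm m),
      B.coinv_muInv hm, A.comul_S b, A.comul_alpha a]
  have claimσ : ∀ t : H ⊗[k] H,
      B.sigma (TensorProduct.lift (B.Gd m) t)
        = TensorProduct.lift ((B.Gd m).compr₂ B.sigma) t := by
    intro t
    induction t using TensorProduct.induction_on with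
    | zero => simp only [map_zero]
    | add u1 u2 h1 h2 => simp only [map_add, h1, h2]
    | tmul a b => simp only [TensorProduct.lift.tmul, LinearMap.compr₂_apply]
  have claimA : ∀ t : H ⊗[k] H,
      TensorProduct.lift ((B.Gd m).compr₂ B.sigma) t
        = B.L1M m ((TensorProduct.map LinearMap.id (TensorProduct.map LinearMap.id A.comul))
            ((TensorProduct.assoc k H H H)
              ((TensorProduct.map A.comul A.α.symm.toLinearMap) t))) := by
    intro t
    induction t using TensorProduct.induction_on with
    | zero => simp only [map_zero]
    | add u v hu hv => simp only [map_add, hu, hv]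
    | tmul a b =>
        rw [TensorProduct.lift.tmul, LinearMap.compr₂_apply, claim2 a b]
        simp only [TensorProduct.map_tmul, LinearEquiv.coe_coe]
        generalize A.comul a = w
        induction w using TensorProduct.induction_on with
        | zero => simp only [TensorProduct.zero_tmul, map_zero, LinearMap.zero_apply]
        | add w1 w2 h1 h2 =>
            simp only [TensorProduct.add_tmul, map_add, LinearMap.add_apply, h1, h2]
        | tmul x y =>
            rw [TensorProduct.assoc_tmul]
            simp only [TensorProduct.map_tmul, LinearMap.id_coe, id_eq, LinearEquiv.coe_coe]
            rw [A.comul_alphaInv b]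
            generalize A.comul b = v
            induction v using TensorProduct.induction_on with
            | zero => simp only [map_zero, TensorProduct.tmul_zero, LinearMap.map_zero]
            | add v1 v2 h1 h2 =>
                simp only [map_add, TensorProduct.tmul_add, LinearMap.map_add, h1, h2]
            | tmul z u =>
                simp only [TensorProduct.map_tmul, TensorProduct.comm_tmul,
                  LinearEquiv.coe_coe, B.L1M_tmul, MonHomHopf.J_tmul, tmul2_tmul,
                  A.α.apply_symm_apply, B.PL_apply, A.PRm_apply]
  rw [B.adLM_eq, claimσ, claimA, A.hom_coassoc, A.coassoc_inner]
  have claimFin : ∀ t : H ⊗[k] H,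
      B.L1M m ((TensorProduct.map A.α.symm.toLinearMap
          ((TensorProduct.map A.α.toLinearMap LinearMap.id) ∘ₗ
            (TensorProduct.assoc k H H H).toLinearMap ∘ₗ
            (TensorProduct.map A.comul A.α.symm.toLinearMap) ∘ₗ A.comul)) t)
        = TensorProduct.lift ((B.TmM m).compr₂ ((TensorProduct.mk k M H).flip A.one)) t := by
    intro t
    induction t using TensorProduct.induction_on with
    | zero => simp only [map_zero]
    | add u v hu hv => simp only [map_add, hu, hv]
    | tmul a x =>
        rw [TensorProduct.map_tmul]
        simp only [LinearMap.comp_apply, LinearEquiv.coe_coe]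
        rw [B.claimD1M m (A.α.symm a) (A.comul x)]
        rw [B.claimD2M]
        simp only [TensorProduct.lift.tmul, LinearMap.compr₂_apply, B.TmM_apply, B.PL_apply,
          TensorProduct.mk_apply, LinearMap.flip_apply, A.α.apply_symm_apply]
  rw [claimFin]
  have fin2 : ∀ s : H ⊗[k] H,
      TensorProduct.lift ((B.TmM m).compr₂ ((TensorProduct.mk k M H).flip A.one)) s
        = ((TensorProduct.mk k M H).flip A.one) (TensorProduct.lift (B.TmM m) s) := by
    intro s
    induction s using TensorProduct.induction_on with
    | zero => simp only [map_zero]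
    | add u v hu hv => simp only [map_add, hu, hv]
    | tmul a x => simp only [TensorProduct.lift.tmul, LinearMap.compr₂_apply]
  have fin3 : ∀ t : H ⊗[k] H,
      TensorProduct.lift (B.TmM m) t = B.μ.symm (TensorProduct.lift (B.Gd m) t) := by
    intro t
    induction t using TensorProduct.induction_on with
    | zero => simp only [map_zero]
    | add u v hu hv => simp only [map_add, hu, hv]
    | tmul a b =>
        simp only [TensorProduct.lift.tmul, B.TmM_apply, B.Gd_apply]
        rw [B.muInv_lact, A.α.symm_apply_apply, B.muInv_ract, A.S_alphaInv]
  rw [fin2, fin3]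
  simp only [LinearMap.flip_apply, TensorProduct.mk_apply]


end Main
/-- the left adjoint Hom-action `h ▷ m = α(h₁)·(μ⁻¹(m)·S(h₂))` preserves
right coinvariants and makes `M^coH` a left `(H,α)`-Hom-module. -/
theorem adLM_left_module_on_coinvariants {k H : Type*} [CommRing k] [AddCommGroup H] [Module k H]
    (A : MonHomHopf k H) {M : Type*} [AddCommGroup M] [Module k M]
    (B : RightCovBimod A M) :
    (∀ h : H, ∀ m ∈ B.rcoinv, B.adLM m h ∈ B.rcoinv) ∧
    (∀ m ∈ B.rcoinv, B.adLM m A.one = B.μ m) ∧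
    (∀ g h : H, ∀ m ∈ B.rcoinv, B.adLM (B.μ m) (A.mul g h) = B.adLM (B.adLM m h) (A.α g)) := by
  refine ⟨?_, ?_, ?_⟩
  · intro h m hm
    have hm' : B.sigma m = (B.μ.symm m) ⊗ₜ[k] A.one := hm
    have : B.sigma (B.adLM m h) = (B.μ.symm (B.adLM m h)) ⊗ₜ[k] A.one :=
      B.adLM_coinv h hm'
    exact this
  · intro m _
    exact B.adLM_one m
  · intro g h m _
    exact B.adLM_assoc g h m
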